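/- Let P1 and P2 be propositional normal logic programs such that no head atom of P2 occurs in P1. Then M is an answer set of P1 ∪ sat(P2) if and only if M = M1 ∪ M2 where M1 is an answer set of P1 and M2 ⊆ heads(sat(P2)) is either {sat} or such that M1 ∪ M2 is an answer set of P2 ∪ fix_{P1}(M1). -/

import Mathlib

open Classical

/-- A propositional normal rule: optional head (none = constraint),
positive body atoms and (default-)negated body atoms. -/
structure ARule (α : Type) where
  head : Option α
  pos : Set α
  neg : Set α

/-- A propositional normal logic program. -/
abbrev AProgram (α : Type) := Set (ARule α)

namespace ASP

variable {α : Type}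

def ARule.headSet (r : ARule α) : Set α := {a | r.head = some a}

def ARule.atoms (r : ARule α) : Set α := ARule.headSet r ∪ r.pos ∪ r.neg

def progAtoms (P : AProgram α) : Set α := ⋃ r ∈ P, ARule.atoms r

def heads (P : AProgram α) : Set α := {a | ∃ r ∈ P, r.head = some a}

/-- The body of a rule is true in interpretation `I`. -/
def bodyTrue (I : Set α) (r : ARule α) : Prop :=
  r.pos ⊆ I ∧ ∀ a ∈ r.neg, a ∉ I

/-- `I` satisfies rule `r`. -/
def satRule (I : Set α) (r : ARule α) : Prop :=
  bodyTrue I r → ∃ h, r.head = some h ∧ h ∈ I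

def isModel (I : Set α) (P : AProgram α) : Prop := ∀ r ∈ P, satRule I r

/-- Gelfond–Lifschitz reduct of `P` with respect to `I`. -/
def reduct (P : AProgram α) (I : Set α) : AProgram α :=
  {r' | ∃ r ∈ P, (∀ a ∈ r.neg, a ∉ I) ∧ r' = ⟨r.head, r.pos, ∅⟩}

/-- `I` is an answer set of `P`: a minimal model of the reduct `P^I`. -/
def isAnswerSet (P : AProgram α) (I : Set α) : Prop :=
  isModel I (reduct P I) ∧ ∀ J, J ⊂ I → ¬ isModel J (reduct P I)

/-- A program is coherent if it has an answer set. -/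
def coherent (P : AProgram α) : Prop := ∃ I, isAnswerSet P I

/-- `fix B M`: facts for atoms of `M` and constraints for atoms of `B \ M`. -/
def fixProg (B M : Set α) : AProgram α :=
  {r | (∃ a ∈ M, r = ⟨some a, ∅, ∅⟩) ∨ (∃ a ∈ B \ M, r = ⟨none, {a}, ∅⟩)}

/-- A ground weak constraint `:~ pos, not neg [weight@level]`. -/
structure WeakC (α : Type) where
  pos : Set α
  neg : Set α
  weight : ℤ
  level : ℤ

def WeakC.atoms (w : WeakC α) : Set α := w.pos ∪ w.neg

/-- The body of a weak constraint is true in `I` (the weak constraint is violated). -/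
def WeakC.violated (w : WeakC α) (I : Set α) : Prop :=
  w.pos ⊆ I ∧ ∀ a ∈ w.neg, a ∉ I

/-- Cost of interpretation `I` at level `l` for weak constraints `W`. -/
noncomputable def cost (W : Finset (WeakC α)) (I : Set α) (l : ℤ) : ℤ :=
  ∑ w ∈ W.filter (fun w => w.level = l ∧ WeakC.violated w I), w.weight

/-- `I` is dominated by `J` with respect to the weak constraints `W`. -/
def dominated (W : Finset (WeakC α)) (I J : Set α) : Prop :=
  ∃ l, cost W I l > cost W J l ∧ ∀ l' > l, cost W I l' = cost W J l'

/-- `M` is an optimal answer set of program `P` with weak constraints `W`. -/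
def optAS (P : AProgram α) (W : Finset (WeakC α)) (M : Set α) : Prop :=
  isAnswerSet P M ∧ ∀ M', isAnswerSet P M' → ¬ dominated W M M'

/-- `sat(P)`: add `not s` to each rule body, plus a choice on the fresh atom `s`
 (rules `s :- not n` and `n :- not s`). -/
def satProg (s n : α) (P : AProgram α) : AProgram α :=
  ((fun r : ARule α => ARule.mk r.head r.pos (insert s r.neg)) '' P) ∪
    {⟨some s, ∅, {n}⟩, ⟨some n, ∅, {s}⟩}

/-- Complement `¬P` of a program with constraints: each constraint `:- B` becomes
 `v :- B`, and the constraint `:- not v` is added. -/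
def complProg (v : α) (P : AProgram α) : AProgram α :=
  {r | r ∈ P ∧ r.head ≠ none} ∪
    {r' | ∃ r ∈ P, r.head = none ∧ r' = ⟨some v, r.pos, r.neg⟩} ∪
    {⟨none, ∅, {v}⟩}

/-- Rules of `relaxed(P,l)`: keep rules with heads, turn each constraint `:- B`
into `unsat :- B`. -/
def relaxedRules (u : α) (P : AProgram α) : AProgram α :=
  {r | r ∈ P ∧ r.head ≠ none} ∪
    {r' | ∃ r ∈ P, r.head = none ∧ r' = ⟨some u, r.pos, r.neg⟩}

/-- The weak constraint `:~ unsat [1@l]` of `relaxed(P,l)`. -/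
def relaxWeak (u : α) (l : ℤ) : WeakC α := ⟨{u}, ∅, 1, l⟩

/-- A stratification: positive dependencies do not increase the level,
negative dependencies strictly decrease it. -/
def IsStratification (P : AProgram α) (lv : α → ℕ) : Prop :=
  ∀ r ∈ P, ∀ h, r.head = some h →
    (∀ a ∈ r.pos, lv a ≤ lv h) ∧ (∀ a ∈ r.neg, lv a < lv h)

def Stratified (P : AProgram α) : Prop := ∃ lv, IsStratification P lv

/-- `M` (an answer set of a program with atom base `B`) satisfies the constraint
program `C` iff `C ∪ fix_B(M)` is coherent. -/
def satisfiesC (C : AProgram α) (B M : Set α) : Prop := coherent (C ∪ fixProg B M)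

end ASP

namespace ASP

variable {α : Type}

lemma mem_progAtoms' {P : AProgram α} {r : ARule α} (hr : r ∈ P) {a : α} (ha : a ∈ ARule.atoms r) :
    a ∈ progAtoms P := Set.mem_biUnion hr ha

lemma head_atoms' {r : ARule α} {a : α} (h : r.head = some a) : a ∈ ARule.atoms r :=
  Or.inl (Or.inl h)

lemma pos_atoms' {r : ARule α} {a : α} (h : a ∈ r.pos) : a ∈ ARule.atoms r := Or.inl (Or.inr h)

lemma neg_atoms' {r : ARule α} {a : α} (h : a ∈ r.neg) : a ∈ ARule.atoms r := Or.inr h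

lemma bt' {I : Set α} {h : Option α} {pos : Set α} (hp : pos ⊆ I) :
    bodyTrue I ⟨h, pos, ∅⟩ :=
  ⟨hp, fun a ha => absurd ha (Set.notMem_empty a)⟩

lemma reduct_union' (P Q : AProgram α) (I : Set α) :
    reduct (P ∪ Q) I = reduct P I ∪ reduct Q I := by
  ext r'; constructor
  · rintro ⟨r, hr | hr, hneg, rfl⟩
    exacts [Or.inl ⟨r, hr, hneg, rfl⟩, Or.inr ⟨r, hr, hneg, rfl⟩]
  · rintro (⟨r, hr, hneg, rfl⟩ | ⟨r, hr, hneg, rfl⟩)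
    exacts [⟨r, Or.inl hr, hneg, rfl⟩, ⟨r, Or.inr hr, hneg, rfl⟩]

lemma reduct_congr' {P : AProgram α} {I J : Set α}
    (h : ∀ r ∈ P, ∀ a ∈ r.neg, (a ∈ I ↔ a ∈ J)) : reduct P I = reduct P J := by
  ext r'; constructor <;> rintro ⟨r, hr, hneg, rfl⟩
  · exact ⟨r, hr, fun a ha hJ => hneg a ha ((h r hr a ha).mpr hJ), rfl⟩
  · exact ⟨r, hr, fun a ha hI => hneg a ha ((h r hr a ha).mp hI), rfl⟩

lemma answerSet_head' {P : AProgram α} {I : Set α} (hI : isAnswerSet P I) :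
    ∀ a ∈ I, ∃ r' ∈ reduct P I, r'.head = some a := by
  intro a ha
  by_contra hc
  push_neg at hc
  apply hI.2 (I \ {a})
    ((Set.ssubset_iff_of_subset Set.diff_subset).mpr ⟨a, ha, fun h => h.2 rfl⟩)
  rintro r' hr' hb
  obtain ⟨r, hr, hneg, rfl⟩ := hr'
  obtain ⟨h, hh, hhI⟩ := hI.1 _ ⟨r, hr, hneg, rfl⟩ (bt' (hb.1.trans Set.diff_subset))
  refine ⟨h, hh, hhI, fun he => ?_⟩
  exact hc _ ⟨r, hr, hneg, rfl⟩ (he ▸ hh)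

lemma answerSet_subset_heads' {P : AProgram α} {I : Set α} (hI : isAnswerSet P I) :
    I ⊆ heads P := by
  intro a ha
  obtain ⟨r', hr', hh⟩ := answerSet_head' hI a ha
  obtain ⟨r, hr, hneg, rfl⟩ := hr'
  exact ⟨r, hr, hh⟩

lemma heads_subset_progAtoms' (P : AProgram α) : heads P ⊆ progAtoms P := by
  rintro a ⟨r, hr, hh⟩; exact mem_progAtoms' hr (head_atoms' hh)

lemma reduct_satProg_s {s n : α} {P : AProgram α} {N : Set α} (hs : s ∈ N) (hn : n ∉ N) :
    reduct (satProg s n P) N = {(⟨some s, ∅, ∅⟩ : ARule α)} := by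
  ext r'; constructor
  · rintro ⟨r, hr, hneg, rfl⟩
    rcases hr with ⟨r0, hr0, rfl⟩ | hr
    · exact absurd hs (hneg s (Set.mem_insert _ _))
    · rcases hr with rfl | rfl
      · rfl
      · exact absurd hs (hneg s rfl)
  · rintro rfl
    exact ⟨⟨some s, ∅, {n}⟩, Or.inr (Set.mem_insert _ _),
      fun a ha => by rwa [Set.mem_singleton_iff] at ha ▸ ha ▸ hn, rfl⟩

lemma reduct_satProg_both {s n : α} {P : AProgram α} {N : Set α} (hs : s ∈ N) (hn : n ∈ N) :
    reduct (satProg s n P) N = ∅ := by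
  ext r'
  simp only [Set.mem_empty_iff_false, iff_false]
  rintro ⟨r, hr, hneg, rfl⟩
  rcases hr with ⟨r0, hr0, rfl⟩ | hr
  · exact hneg s (Set.mem_insert _ _) hs
  · rcases hr with rfl | rfl
    · exact hneg n rfl hn
    · exact hneg s rfl hs

lemma reduct_satProg_not_s {s n : α} {P : AProgram α} {N : Set α} (hs : s ∉ N) (hn : n ∈ N) :
    reduct (satProg s n P) N = reduct P N ∪ {(⟨some n, ∅, ∅⟩ : ARule α)} := by
  ext r'; constructor
  · rintro ⟨r, hr, hneg, rfl⟩
    rcases hr with ⟨r0, hr0, rfl⟩ | hr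
    · exact Or.inl ⟨r0, hr0, fun a ha => hneg a (Set.mem_insert_of_mem _ ha), rfl⟩
    · rcases hr with rfl | rfl
      · exact absurd hn (hneg n rfl)
      · exact Or.inr rfl
  · rintro (⟨r, hr, hneg, rfl⟩ | rfl)
    · refine ⟨⟨r.head, r.pos, insert s r.neg⟩, Or.inl ⟨r, hr, rfl⟩, ?_, rfl⟩
      rintro a (rfl | ha)
      · exact hs
      · exact hneg a ha
    · exact ⟨⟨some n, ∅, {s}⟩, Or.inr (Set.mem_insert_of_mem _ rfl),
        fun a ha => by rw [Set.mem_singleton_iff] at ha; exact ha ▸ hs, rfl⟩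

lemma reduct_fixProg' (B M I : Set α) : reduct (fixProg B M) I = fixProg B M := by
  ext r'; constructor
  · rintro ⟨r, hr, hneg, rfl⟩
    rcases hr with ⟨a, ha, rfl⟩ | ⟨a, ha, rfl⟩
    · exact Or.inl ⟨a, ha, rfl⟩
    · exact Or.inr ⟨a, ha, rfl⟩
  · rintro (⟨a, ha, rfl⟩ | ⟨a, ha, rfl⟩)
    · exact ⟨⟨some a, ∅, ∅⟩, Or.inl ⟨a, ha, rfl⟩, fun b hb => absurd hb (Set.notMem_empty b), rfl⟩
    · exact ⟨⟨none, {a}, ∅⟩, Or.inr ⟨a, ha, rfl⟩, fun b hb => absurd hb (Set.notMem_empty b), rfl⟩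

lemma mem_heads_satProg_s (s n : α) (P : AProgram α) : s ∈ heads (satProg s n P) :=
  ⟨⟨some s, ∅, {n}⟩, Or.inr (Set.mem_insert _ _), rfl⟩

lemma heads_subset_satProg (s n : α) (P : AProgram α) :
    heads P ⊆ heads (satProg s n P) := by
  rintro a ⟨r, hr, hh⟩
  exact ⟨⟨r.head, r.pos, insert s r.neg⟩, Or.inl ⟨r, hr, rfl⟩, hh⟩

end ASP

open ASP in
/-- answer sets of `P1 ∪ sat(P2)` (up to the hidden atom `n` = nsat)
decompose as `M1 ∪ M2` with `M1` an answer set of `P1` and `M2 ⊆ heads(sat(P2))`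
either `{s}` (= {sat}) or such that `M1 ∪ M2` is an answer set of
`P2 ∪ fix_{P1}(M1)`. -/
theorem union_sat_answer_sets {α : Type} (P1 P2 : AProgram α)
    (hfin1 : P1.Finite) (hfin2 : P2.Finite) (s n : α)
    (hheads : ∀ a ∈ heads P2, a ∉ progAtoms P1)
    (hs : s ∉ progAtoms P1 ∪ progAtoms P2) (hn : n ∉ progAtoms P1 ∪ progAtoms P2)
    (hsn : s ≠ n) (M : Set α) :
    (∃ N, isAnswerSet (P1 ∪ satProg s n P2) N ∧ M = N \ {n}) ↔
      ∃ M1 M2, M = M1 ∪ M2 ∧ isAnswerSet P1 M1 ∧ M2 ⊆ heads (satProg s n P2) ∧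
        (M2 = {s} ∨ isAnswerSet (P2 ∪ fixProg (progAtoms P1) M1) (M1 ∪ M2)) := by
  have hsB1 : s ∉ progAtoms P1 := fun h => hs (Or.inl h)
  have hsB2 : s ∉ progAtoms P2 := fun h => hs (Or.inr h)
  have hnB1 : n ∉ progAtoms P1 := fun h => hn (Or.inl h)
  have hnB2 : n ∉ progAtoms P2 := fun h => hn (Or.inr h)
  constructor
  · rintro ⟨N, hN, rfl⟩
    by_cases hsN : s ∈ N
    · -- case s ∈ N : M2 = {s}
      have hnN : n ∉ N := by
        intro hnN
        obtain ⟨r', hr', hh⟩ := answerSet_head' hN n hnN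
        rw [reduct_union', reduct_satProg_both hsN hnN] at hr'
        rcases hr' with hr' | hr'
        · obtain ⟨r, hr, hneg, rfl⟩ := hr'
          exact hnB1 (mem_progAtoms' hr (head_atoms' hh))
        · exact absurd hr' (Set.notMem_empty _)
      have hredP1 : reduct P1 N = reduct P1 (N \ {s}) :=
        reduct_congr' (by
          intro r hr a ha
          constructor
          · intro h
            refine ⟨h, fun he => hsB1 ?_⟩
            rw [Set.mem_singleton_iff] at he
            exact he ▸ mem_progAtoms' hr (neg_atoms' ha)
          · exact fun h => h.1)
      obtain ⟨hNmod, hNmin⟩ := hN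
      rw [show reduct (P1 ∪ satProg s n P2) N
            = reduct P1 (N \ {s}) ∪ {(⟨some s, ∅, ∅⟩ : ARule α)} from by
          rw [reduct_union', reduct_satProg_s hsN hnN, hredP1]] at hNmod hNmin
      have hmod1 : isModel (N \ {s}) (reduct P1 (N \ {s})) := by
        rintro r' hr' hb
        obtain ⟨r, hr, hneg, rfl⟩ := hr'
        obtain ⟨h, hh, hhN⟩ := hNmod _ (Or.inl ⟨r, hr, hneg, rfl⟩)
          (bt' (hb.1.trans Set.diff_subset))
        refine ⟨h, hh, hhN, fun he => hsB1 ?_⟩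
        rw [Set.mem_singleton_iff] at he
        exact he ▸ mem_progAtoms' hr (head_atoms' hh)
      have hmin1 : ∀ J, J ⊂ N \ {s} → ¬ isModel J (reduct P1 (N \ {s})) := by
        intro J hJ hJmod
        obtain ⟨a, haM1, haJ⟩ := Set.exists_of_ssubset hJ
        refine hNmin (J ∪ {s}) ?_ ?_
        · refine (Set.ssubset_iff_of_subset ?_).mpr ⟨a, haM1.1, ?_⟩
          · exact Set.union_subset (hJ.1.trans Set.diff_subset)
              (Set.singleton_subset_iff.mpr hsN)
          · rintro (h | h)
            · exact haJ h
            · exact haM1.2 h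
        · rintro r' (hr' | hr') hb
          · obtain ⟨r, hr, hneg, rfl⟩ := hr'
            have hpos : r.pos ⊆ J := by
              intro b hbp
              rcases hb.1 hbp with h | h
              · exact h
              · rw [Set.mem_singleton_iff] at h
                exact absurd (mem_progAtoms' hr (pos_atoms' hbp)) (h ▸ hsB1)
            obtain ⟨h, hh, hhJ⟩ := hJmod _ ⟨r, hr, hneg, rfl⟩ (bt' hpos)
            exact ⟨h, hh, Or.inl hhJ⟩
          · rw [Set.mem_singleton_iff] at hr'; subst hr'
            exact ⟨s, rfl, Or.inr rfl⟩
      refine ⟨N \ {s}, {s}, ?_, ⟨hmod1, hmin1⟩,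
        Set.singleton_subset_iff.mpr (mem_heads_satProg_s s n P2), Or.inl rfl⟩
      rw [Set.diff_singleton_eq_self hnN]
      exact (Set.diff_union_of_subset (Set.singleton_subset_iff.mpr hsN)).symm
    · -- case s ∉ N
      have hnfact : (⟨some n, ∅, ∅⟩ : ARule α) ∈ reduct (P1 ∪ satProg s n P2) N :=
        ⟨⟨some n, ∅, {s}⟩, Or.inr (Or.inr (Set.mem_insert_of_mem _ rfl)),
          fun a ha => by rw [Set.mem_singleton_iff] at ha; exact ha ▸ hsN, rfl⟩
      have hnN : n ∈ N := by
        obtain ⟨h, hh, hhN⟩ := hN.1 _ hnfact (bt' (Set.empty_subset N))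
        rw [Option.some_inj] at hh; subst hh; exact hhN
      have hNheads := answerSet_head' hN
      set M1 : Set α := N ∩ progAtoms P1 with hM1def
      have hM1sub : M1 ⊆ N := Set.inter_subset_left
      have hcong1 : reduct P1 N = reduct P1 M1 :=
        reduct_congr' (fun r hr a ha =>
          Iff.intro (fun h => ⟨h, mem_progAtoms' hr (neg_atoms' ha)⟩) (fun h => h.1))
      have hcong2 : reduct P2 N = reduct P2 (N \ {n}) :=
        reduct_congr' (by
          intro r hr a ha
          constructor
          · intro h
            refine ⟨h, fun he => hnB2 ?_⟩
            rw [Set.mem_singleton_iff] at he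
            exact he ▸ mem_progAtoms' hr (neg_atoms' ha)
          · exact fun h => h.1)
      obtain ⟨hNmod, hNmin⟩ := hN
      rw [show reduct (P1 ∪ satProg s n P2) N
            = reduct P1 M1 ∪ (reduct P2 (N \ {n}) ∪ {(⟨some n, ∅, ∅⟩ : ARule α)}) from by
          rw [reduct_union', reduct_satProg_not_s hsN hnN, hcong1, hcong2]]
        at hNmod hNmin hNheads
      have hmod1 : isModel M1 (reduct P1 M1) := by
        rintro r' hr' hb
        obtain ⟨r, hr, hneg, rfl⟩ := hr'
        obtain ⟨h, hh, hhN⟩ := hNmod _ (Or.inl ⟨r, hr, hneg, rfl⟩)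
          (bt' (hb.1.trans hM1sub))
        exact ⟨h, hh, hhN, mem_progAtoms' hr (head_atoms' hh)⟩
      have hmin1 : ∀ J, J ⊂ M1 → ¬ isModel J (reduct P1 M1) := by
        intro J hJ hJmod
        obtain ⟨a, haM1, haJ⟩ := Set.exists_of_ssubset hJ
        refine hNmin (J ∪ (N \ progAtoms P1)) ?_ ?_
        · refine (Set.ssubset_iff_of_subset ?_).mpr ⟨a, haM1.1, ?_⟩
          · exact Set.union_subset (hJ.1.trans hM1sub) Set.diff_subset
          · rintro (h | h)
            · exact haJ h
            · exact h.2 haM1.2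
        · rintro r' (hr' | hr' | hr') hb
          · obtain ⟨r, hr, hneg, rfl⟩ := hr'
            have hpos : r.pos ⊆ J := by
              intro b hbp
              rcases hb.1 hbp with h | h
              · exact h
              · exact absurd (mem_progAtoms' hr (pos_atoms' hbp)) h.2
            obtain ⟨h, hh, hhJ⟩ := hJmod _ ⟨r, hr, hneg, rfl⟩ (bt' hpos)
            exact ⟨h, hh, Or.inl hhJ⟩
          · obtain ⟨r, hr, hneg, rfl⟩ := hr'
            have hposN : r.pos ⊆ N := by
              intro b hbp
              rcases hb.1 hbp with h | h
              · exact hM1sub (hJ.1 h)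
              · exact h.1
            obtain ⟨h, hh, hhN⟩ := hNmod _ (Or.inr (Or.inl ⟨r, hr, hneg, rfl⟩))
              (bt' hposN)
            exact ⟨h, hh, Or.inr ⟨hhN, hheads h ⟨r, hr, hh⟩⟩⟩
          · rw [Set.mem_singleton_iff] at hr'; subst hr'
            exact ⟨n, rfl, Or.inr ⟨hnN, hnB1⟩⟩
      have hM2 : (N \ {n}) \ progAtoms P1 ⊆ heads P2 := by
        rintro a ⟨⟨haN, han⟩, haB1⟩
        obtain ⟨r', hr', hh⟩ := hNheads a haN
        rcases hr' with hr' | hr' | hr'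
        · obtain ⟨r, hr, -, rfl⟩ := hr'
          exact absurd (mem_progAtoms' hr (head_atoms' hh)) haB1
        · obtain ⟨r, hr, -, rfl⟩ := hr'
          exact ⟨r, hr, hh⟩
        · rw [Set.mem_singleton_iff] at hr'; subst hr'
          exact absurd (Option.some_inj.mp hh).symm han
      have hMmod : isModel (N \ {n})
          (reduct P2 (N \ {n}) ∪ fixProg (progAtoms P1) M1) := by
        rintro r' (hr' | hr') hb
        · obtain ⟨r, hr, hneg, rfl⟩ := hr'
          obtain ⟨h, hh, hhN⟩ := hNmod _ (Or.inr (Or.inl ⟨r, hr, hneg, rfl⟩))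
            (bt' (hb.1.trans Set.diff_subset))
          refine ⟨h, hh, hhN, fun he => hnB2 ?_⟩
          rw [Set.mem_singleton_iff] at he
          exact he ▸ mem_progAtoms' hr (head_atoms' hh)
        · rcases hr' with ⟨a, ha, rfl⟩ | ⟨a, ha, rfl⟩
          · refine ⟨a, rfl, ha.1, fun he => hnB1 ?_⟩
            rw [Set.mem_singleton_iff] at he
            exact he ▸ ha.2
          · exfalso
            have haM : a ∈ N \ {n} := hb.1 rfl
            exact ha.2 ⟨haM.1, ha.1⟩
      have hMmin : ∀ J, J ⊂ N \ {n} →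
          ¬ isModel J (reduct P2 (N \ {n}) ∪ fixProg (progAtoms P1) M1) := by
        intro J hJ hJmod
        obtain ⟨a, haM, haJ⟩ := Set.exists_of_ssubset hJ
        have hM1J : M1 ⊆ J := by
          intro b hb
          obtain ⟨h, hh, hhJ⟩ := hJmod _ (Or.inr (Or.inl ⟨b, hb, rfl⟩))
            (bt' (Set.empty_subset J))
          rw [Option.some_inj] at hh
          exact hh.symm ▸ hhJ
        have hJB1 : J ∩ progAtoms P1 = M1 := by
          apply Set.Subset.antisymm
          · intro b hb
            exact ⟨(hJ.1 hb.1).1, hb.2⟩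
          · intro b hb
            exact ⟨hM1J hb, hb.2⟩
        refine hNmin (J ∪ {n}) ?_ ?_
        · refine (Set.ssubset_iff_of_subset ?_).mpr ⟨a, haM.1, ?_⟩
          · exact Set.union_subset (hJ.1.trans Set.diff_subset)
              (Set.singleton_subset_iff.mpr hnN)
          · rintro (h | h)
            · exact haJ h
            · exact haM.2 h
        · rintro r' (hr' | hr' | hr') hb
          · obtain ⟨r, hr, hneg, rfl⟩ := hr'
            have hpos : r.pos ⊆ M1 := by
              intro b hbp
              have hbB1 : b ∈ progAtoms P1 := mem_progAtoms' hr (pos_atoms' hbp)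
              rcases hb.1 hbp with h | h
              · exact hJB1 ▸ (⟨h, hbB1⟩ : b ∈ J ∩ progAtoms P1)
              · rw [Set.mem_singleton_iff] at h
                exact absurd (h ▸ hbB1) hnB1
            obtain ⟨h, hh, hhM1⟩ := hmod1 _ ⟨r, hr, hneg, rfl⟩ (bt' hpos)
            exact ⟨h, hh, Or.inl (hM1J hhM1)⟩
          · obtain ⟨r, hr, hneg, rfl⟩ := hr'
            have hpos : r.pos ⊆ J := by
              intro b hbp
              rcases hb.1 hbp with h | h
              · exact h
              · rw [Set.mem_singleton_iff] at h
                exact absurd (h ▸ mem_progAtoms' hr (pos_atoms' hbp)) hnB2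
            obtain ⟨h, hh, hhJ⟩ := hJmod _ (Or.inl ⟨r, hr, hneg, rfl⟩) (bt' hpos)
            exact ⟨h, hh, Or.inl hhJ⟩
          · rw [Set.mem_singleton_iff] at hr'; subst hr'
            exact ⟨n, rfl, Or.inr rfl⟩
      have heq : N \ {n} = M1 ∪ ((N \ {n}) \ progAtoms P1) := by
        ext a
        constructor
        · intro ha
          by_cases hb : a ∈ progAtoms P1
          · exact Or.inl ⟨ha.1, hb⟩
          · exact Or.inr ⟨ha, hb⟩
        · rintro (⟨haN, haB⟩ | ⟨ha, -⟩)
          · refine ⟨haN, fun he => hnB1 ?_⟩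
            rw [Set.mem_singleton_iff] at he
            exact he ▸ haB
          · exact ha
      refine ⟨M1, (N \ {n}) \ progAtoms P1, heq, ⟨hmod1, hmin1⟩,
        fun a ha => heads_subset_satProg s n P2 (hM2 ha), Or.inr ?_⟩
      have hASR : isAnswerSet (P2 ∪ fixProg (progAtoms P1) M1) (N \ {n}) := by
        constructor
        · rw [show reduct (P2 ∪ fixProg (progAtoms P1) M1) (N \ {n})
                = reduct P2 (N \ {n}) ∪ fixProg (progAtoms P1) M1 from by
              rw [reduct_union', reduct_fixProg']]
          exact hMmod
        · intro J hJ
          rw [show reduct (P2 ∪ fixProg (progAtoms P1) M1) (N \ {n})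
                = reduct P2 (N \ {n}) ∪ fixProg (progAtoms P1) M1 from by
              rw [reduct_union', reduct_fixProg']]
          exact hMmin J hJ
      exact heq ▸ hASR
  · rintro ⟨M1, M2, rfl, hM1, hM2sub, hM2 | hM2⟩
    · -- M2 = {s}
      subst hM2
      have hM1B1 : M1 ⊆ progAtoms P1 :=
        (answerSet_subset_heads' hM1).trans (heads_subset_progAtoms' P1)
      have hsM1 : s ∉ M1 := fun h => hsB1 (hM1B1 h)
      have hnM1 : n ∉ M1 := fun h => hnB1 (hM1B1 h)
      have hsN : s ∈ M1 ∪ {s} := Or.inr rfl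
      have hnN : n ∉ M1 ∪ {s} := by
        rintro (h | h)
        · exact hnM1 h
        · rw [Set.mem_singleton_iff] at h
          exact hsn h.symm
      obtain ⟨hmod, hmin⟩ := hM1
      have hredc : reduct P1 (M1 ∪ {s}) = reduct P1 M1 :=
        reduct_congr' (by
          intro r hr a ha
          constructor
          · rintro (h | h)
            · exact h
            · rw [Set.mem_singleton_iff] at h
              exact absurd (h ▸ mem_progAtoms' hr (neg_atoms' ha)) hsB1
          · exact fun h => Or.inl h)
      refine ⟨M1 ∪ {s}, ⟨?_, ?_⟩, (Set.diff_singleton_eq_self hnN).symm⟩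
      · rw [show reduct (P1 ∪ satProg s n P2) (M1 ∪ {s})
              = reduct P1 M1 ∪ {(⟨some s, ∅, ∅⟩ : ARule α)} from by
            rw [reduct_union', reduct_satProg_s hsN hnN, hredc]]
        rintro r' (hr' | hr') hb
        · obtain ⟨r, hr, hneg, rfl⟩ := hr'
          have hpos : r.pos ⊆ M1 := by
            intro b hbp
            rcases hb.1 hbp with h | h
            · exact h
            · rw [Set.mem_singleton_iff] at h
              exact absurd (h ▸ mem_progAtoms' hr (pos_atoms' hbp)) hsB1
          obtain ⟨h, hh, hhM1⟩ := hmod _ ⟨r, hr, hneg, rfl⟩ (bt' hpos)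
          exact ⟨h, hh, Or.inl hhM1⟩
        · rw [Set.mem_singleton_iff] at hr'; subst hr'
          exact ⟨s, rfl, Or.inr rfl⟩
      · intro J hJ hJmod
        rw [show reduct (P1 ∪ satProg s n P2) (M1 ∪ {s})
              = reduct P1 M1 ∪ {(⟨some s, ∅, ∅⟩ : ARule α)} from by
            rw [reduct_union', reduct_satProg_s hsN hnN, hredc]] at hJmod
        have hsJ : s ∈ J := by
          obtain ⟨h, hh, hhJ⟩ := hJmod _ (Or.inr rfl) (bt' (Set.empty_subset J))
          rw [Option.some_inj] at hh
          exact hh.symm ▸ hhJ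
        refine hmin (J \ {s}) ?_ ?_
        · obtain ⟨x, hxN, hxJ⟩ := Set.exists_of_ssubset hJ
          have hxM1 : x ∈ M1 := by
            rcases hxN with h | h
            · exact h
            · rw [Set.mem_singleton_iff] at h
              exact absurd (h.symm ▸ hsJ) hxJ
          refine (Set.ssubset_iff_of_subset ?_).mpr ⟨x, hxM1, fun hx => hxJ hx.1⟩
          intro b hb
          rcases hJ.1 hb.1 with h | h
          · exact h
          · exact absurd h hb.2
        · rintro r' hr' hb
          obtain ⟨r, hr, hneg, rfl⟩ := hr'
          obtain ⟨h, hh, hhJ⟩ := hJmod _ (Or.inl ⟨r, hr, hneg, rfl⟩)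
            (bt' (hb.1.trans Set.diff_subset))
          refine ⟨h, hh, hhJ, fun he => hsB1 ?_⟩
          rw [Set.mem_singleton_iff] at he
          exact he ▸ mem_progAtoms' hr (head_atoms' hh)
    · -- M1 ∪ M2 answer set of P2 ∪ fix
      have hM1B1 : M1 ⊆ progAtoms P1 :=
        (answerSet_subset_heads' hM1).trans (heads_subset_progAtoms' P1)
      have hM2B1 : ∀ a ∈ M2, a ∉ progAtoms P1 := by
        intro a ha
        rcases hM2sub ha with ⟨r, hr, hh⟩
        rcases hr with ⟨r0, hr0, rfl⟩ | hr
        · exact hheads a ⟨r0, hr0, hh⟩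
        · rcases hr with rfl | rfl
          · rw [Option.some_inj] at hh
            exact hh ▸ hsB1
          · rw [Option.some_inj] at hh
            exact hh ▸ hnB1
      have hsM : s ∉ M1 ∪ M2 := by
        intro h
        obtain ⟨r, hr, hh⟩ := answerSet_subset_heads' hM2 h
        rcases hr with hr | ⟨a, ha, rfl⟩ | ⟨a, ha, rfl⟩
        · exact hsB2 (mem_progAtoms' hr (head_atoms' hh))
        · rw [Option.some_inj] at hh
          exact hsB1 (hM1B1 (hh ▸ ha))
        · exact Option.some_ne_none _ hh.symm
      have hnM : n ∉ M1 ∪ M2 := by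
        intro h
        obtain ⟨r, hr, hh⟩ := answerSet_subset_heads' hM2 h
        rcases hr with hr | ⟨a, ha, rfl⟩ | ⟨a, ha, rfl⟩
        · exact hnB2 (mem_progAtoms' hr (head_atoms' hh))
        · rw [Option.some_inj] at hh
          exact hnB1 (hM1B1 (hh ▸ ha))
        · exact Option.some_ne_none _ hh.symm
      have hnN : n ∈ (M1 ∪ M2) ∪ {n} := Or.inr rfl
      have hsN : s ∉ (M1 ∪ M2) ∪ {n} := by
        rintro (h | h)
        · exact hsM h
        · rw [Set.mem_singleton_iff] at h
          exact hsn h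
      have hcong1 : reduct P1 ((M1 ∪ M2) ∪ {n}) = reduct P1 M1 :=
        reduct_congr' (by
          intro r hr a ha
          have haB1 : a ∈ progAtoms P1 := mem_progAtoms' hr (neg_atoms' ha)
          constructor
          · rintro ((h | h) | h)
            · exact h
            · exact absurd haB1 (hM2B1 a h)
            · rw [Set.mem_singleton_iff] at h
              exact absurd (h ▸ haB1) hnB1
          · exact fun h => Or.inl (Or.inl h))
      have hcong2 : reduct P2 ((M1 ∪ M2) ∪ {n}) = reduct P2 (M1 ∪ M2) :=
        reduct_congr' (by
          intro r hr a ha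
          have haB2 : a ∈ progAtoms P2 := mem_progAtoms' hr (neg_atoms' ha)
          constructor
          · rintro (h | h)
            · exact h
            · rw [Set.mem_singleton_iff] at h
              exact absurd (h ▸ haB2) hnB2
          · exact fun h => Or.inl h)
      obtain ⟨hmod1, hmin1⟩ := hM1
      obtain ⟨hmodR, hminR⟩ := hM2
      rw [show reduct (P2 ∪ fixProg (progAtoms P1) M1) (M1 ∪ M2)
            = reduct P2 (M1 ∪ M2) ∪ fixProg (progAtoms P1) M1 from by
          rw [reduct_union', reduct_fixProg']] at hmodR hminR
      have hMeq : M1 ∪ M2 = ((M1 ∪ M2) ∪ {n}) \ {n} := by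
        ext a
        constructor
        · intro h
          refine ⟨Or.inl h, fun he => hnM ?_⟩
          rw [Set.mem_singleton_iff] at he
          exact he ▸ h
        · rintro ⟨h | h, hne⟩
          · exact h
          · exact absurd h hne
      refine ⟨(M1 ∪ M2) ∪ {n}, ⟨?_, ?_⟩, hMeq⟩
      · rw [show reduct (P1 ∪ satProg s n P2) ((M1 ∪ M2) ∪ {n})
              = reduct P1 M1 ∪ (reduct P2 (M1 ∪ M2) ∪ {(⟨some n, ∅, ∅⟩ : ARule α)}) from by
            rw [reduct_union', reduct_satProg_not_s hsN hnN, hcong1, hcong2]]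
        rintro r' (hr' | hr' | hr') hb
        · obtain ⟨r, hr, hneg, rfl⟩ := hr'
          have hpos : r.pos ⊆ M1 := by
            intro b hbp
            have hbB1 : b ∈ progAtoms P1 := mem_progAtoms' hr (pos_atoms' hbp)
            rcases hb.1 hbp with (h | h) | h
            · exact h
            · exact absurd hbB1 (hM2B1 b h)
            · rw [Set.mem_singleton_iff] at h
              exact absurd (h ▸ hbB1) hnB1
          obtain ⟨h, hh, hhM1⟩ := hmod1 _ ⟨r, hr, hneg, rfl⟩ (bt' hpos)
          exact ⟨h, hh, Or.inl (Or.inl hhM1)⟩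
        · obtain ⟨r, hr, hneg, rfl⟩ := hr'
          have hpos : r.pos ⊆ M1 ∪ M2 := by
            intro b hbp
            rcases hb.1 hbp with h | h
            · exact h
            · rw [Set.mem_singleton_iff] at h
              exact absurd (h ▸ mem_progAtoms' hr (pos_atoms' hbp)) hnB2
          obtain ⟨h, hh, hhM⟩ := hmodR _ (Or.inl ⟨r, hr, hneg, rfl⟩) (bt' hpos)
          exact ⟨h, hh, Or.inl hhM⟩
        · rw [Set.mem_singleton_iff] at hr'; subst hr'
          exact ⟨n, rfl, Or.inr rfl⟩
      · intro J hJ hJmod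
        rw [show reduct (P1 ∪ satProg s n P2) ((M1 ∪ M2) ∪ {n})
              = reduct P1 M1 ∪ (reduct P2 (M1 ∪ M2) ∪ {(⟨some n, ∅, ∅⟩ : ARule α)}) from by
            rw [reduct_union', reduct_satProg_not_s hsN hnN, hcong1, hcong2]] at hJmod
        have hnJ : n ∈ J := by
          obtain ⟨h, hh, hhJ⟩ := hJmod _ (Or.inr (Or.inr rfl)) (bt' (Set.empty_subset J))
          rw [Option.some_inj] at hh
          exact hh.symm ▸ hhJ
        have hJB1mod : isModel (J ∩ progAtoms P1) (reduct P1 M1) := by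
          rintro r' hr' hb
          obtain ⟨r, hr, hneg, rfl⟩ := hr'
          obtain ⟨h, hh, hhJ⟩ := hJmod _ (Or.inl ⟨r, hr, hneg, rfl⟩)
            (bt' (hb.1.trans Set.inter_subset_left))
          exact ⟨h, hh, hhJ, mem_progAtoms' hr (head_atoms' hh)⟩
        have hJB1sub : J ∩ progAtoms P1 ⊆ M1 := by
          rintro a ⟨haJ, haB⟩
          rcases hJ.1 haJ with (h | h) | h
          · exact h
          · exact absurd haB (hM2B1 a h)
          · rw [Set.mem_singleton_iff] at h
            exact absurd (h ▸ haB) hnB1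
        have hJB1 : J ∩ progAtoms P1 = M1 := by
          by_contra hne
          exact hmin1 _ (Set.ssubset_iff_subset_ne.mpr ⟨hJB1sub, hne⟩) hJB1mod
        refine hminR (J \ {n}) ?_ ?_
        · obtain ⟨x, hxN, hxJ⟩ := Set.exists_of_ssubset hJ
          have hxM : x ∈ M1 ∪ M2 := by
            rcases hxN with h | h
            · exact h
            · rw [Set.mem_singleton_iff] at h
              exact absurd (h.symm ▸ hnJ) hxJ
          refine (Set.ssubset_iff_of_subset ?_).mpr ⟨x, hxM, fun hx => hxJ hx.1⟩
          intro b hb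
          rcases hJ.1 hb.1 with h | h
          · exact h
          · exact absurd h hb.2
        · rintro r' (hr' | hr') hb
          · obtain ⟨r, hr, hneg, rfl⟩ := hr'
            obtain ⟨h, hh, hhJ⟩ := hJmod _ (Or.inr (Or.inl ⟨r, hr, hneg, rfl⟩))
              (bt' (hb.1.trans Set.diff_subset))
            refine ⟨h, hh, hhJ, fun he => hnB2 ?_⟩
            rw [Set.mem_singleton_iff] at he
            exact he ▸ mem_progAtoms' hr (head_atoms' hh)
          · rcases hr' with ⟨a, ha, rfl⟩ | ⟨a, ha, rfl⟩
            · have haJ : a ∈ J ∩ progAtoms P1 := hJB1.symm ▸ ha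
              refine ⟨a, rfl, haJ.1, fun he => hnB1 ?_⟩
              rw [Set.mem_singleton_iff] at he
              exact he ▸ haJ.2
            · exfalso
              have haJ : a ∈ J \ {n} := hb.1 rfl
              exact ha.2 (hJB1 ▸ (⟨haJ.1, ha.1⟩ : a ∈ J ∩ progAtoms P1))
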